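/- Theorem 3.1 (generalization bound with real and synthetic data). Let P₀ and P_g be probability measures on Z with P₀(Zᵢ) > 0 and P_g(Zᵢ) > 0 for every i ∈ {1,…,K}. Fix n ≥ 1, g ≥ 1 and δ > 0. Then with probability at least 1 − δ over the independent draws S = (s₁,…,s_n) ~ P₀^⊗n and G = (u₁,…,u_g) ~ P_g^⊗g, the following implication holds: if every entry of G lies in ⋃_{i ∈ T_S} Zᵢ and gᵢ := |Gᵢ| > 0 for every i ∈ T_S (where Gᵢ is the subtuple of G lying in Zᵢ), then F(P₀) ≤ L · Σ_{i ∈ T_S} (gᵢ/g) · [ d̄(Gᵢ, Sᵢ) + R(Gᵢ, Zᵢ | P_g) ] + F(P_g) + Σ_{i ∈ T_S} (nᵢ/n − gᵢ/g) · F(Sᵢ) + L · Σ_{i ∈ T_S} (nᵢ/n) · R(Sᵢ, Zᵢ | P₀) + C·(1/√n + 1/√g)·√(2K·ln 2 + 2·ln(2/δ)), where nᵢ = |Sᵢ|. -/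

import Mathlib

open MeasureTheory ProbabilityTheory

open Classical in
/-- The set of indices of the entries of the tuple `S` that lie in the region `A`. -/
noncomputable def idxIn {Z : Type*} {m : ℕ} (S : Fin m → Z) (A : Set Z) : Finset (Fin m) :=
  Finset.univ.filter fun j => S j ∈ A

open Classical in
/-- `T_S`: the set of indices `i` of regions `Zpart i` containing at least one entry of `S`. -/
noncomputable def TS {Z : Type*} {K m : ℕ} (Zpart : Fin K → Set Z) (S : Fin m → Z) :
    Finset (Fin K) :=
  Finset.univ.filter fun i => (idxIn S (Zpart i)).Nonempty

/-- Empirical loss of `ℓ` on the subtuple of `S` indexed by `B`. -/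
noncomputable def empLoss {Z : Type*} {m : ℕ} (ℓ : Z → ℝ) (S : Fin m → Z)
    (B : Finset (Fin m)) : ℝ :=
  (B.card : ℝ)⁻¹ * ∑ j ∈ B, ℓ (S j)

/-- Local robustness `R(s, A | P) = E_{z∼P}[‖h z − h s‖ | z ∈ A]`. -/
noncomputable def locRob {Z : Type*} [MeasurableSpace Z] {H : Type*} [NormedAddCommGroup H]
    (h : Z → H) (P : Measure Z) (A : Set Z) (s : Z) : ℝ :=
  ∫ z, ‖h z - h s‖ ∂(P[|A])

/-- Local robustness of the subtuple of `S` indexed by `B`: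
`R(S_B, A | P) = (1/|B|) ∑_{j∈B} R(S j, A | P)`. -/
noncomputable def tupRob {Z : Type*} [MeasurableSpace Z] {H : Type*} [NormedAddCommGroup H]
    (h : Z → H) (P : Measure Z) (A : Set Z) {m : ℕ} (S : Fin m → Z) (B : Finset (Fin m)) : ℝ :=
  (B.card : ℝ)⁻¹ * ∑ j ∈ B, locRob h P A (S j)

/-- `h`-based discrepancy `d̄(G_{BG}, S_{BS})` between the subtuple of `G` indexed by `BG`
and the subtuple of `S` indexed by `BS`. -/
noncomputable def disc {Z : Type*} {H : Type*} [NormedAddCommGroup H] (h : Z → H)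
    {k m : ℕ} (G : Fin k → Z) (BG : Finset (Fin k)) (S : Fin m → Z) (BS : Finset (Fin m)) : ℝ :=
  ((BG.card : ℝ) * (BS.card : ℝ))⁻¹ * ∑ u ∈ BG, ∑ s ∈ BS, ‖h (S s) - h (G u)‖


section Aux
open Real

lemma exp_le_quad {x : ℝ} (hx : |x| ≤ 1) : Real.exp x ≤ 1 + x + (3/4) * x ^ 2 := by
  have h := Real.exp_bound hx (n := 3) (by norm_num)
  have h2 : |x| ^ 3 ≤ |x| ^ 2 := pow_le_pow_of_le_one (abs_nonneg x) hx (by norm_num)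
  have h3 : |x| ^ 2 = x ^ 2 := sq_abs x
  simp only [Finset.sum_range_succ, Finset.sum_range_zero] at h
  norm_num [Nat.factorial] at h
  have := abs_le.mp h
  nlinarith [this.2]

lemma integrable_of_bdd {Z : Type*} [MeasurableSpace Z] {μ : Measure Z} [IsFiniteMeasure μ]
    {f : Z → ℝ} (hf : Measurable f) {c : ℝ} (hb : ∀ z, |f z| ≤ c) : Integrable f μ :=
  Integrable.mono' (integrable_const c) hf.aestronglyMeasurable
    (Filter.Eventually.of_forall fun z => by simpa using hb z)

lemma mgf_bound {Z : Type*} [MeasurableSpace Z] (μ : Measure Z) [IsProbabilityMeasure μ]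
    {Y : Z → ℝ} (hY : Measurable Y) {C : ℝ} (hbd : ∀ z, |Y z| ≤ C)
    (hmean : ∫ z, Y z ∂μ = 0) {v : ℝ} (hvar : ∫ z, (Y z) ^ 2 ∂μ ≤ v)
    {l : ℝ} (hl : 0 ≤ l) (hlC : l * C ≤ 1) :
    ∫ z, Real.exp (l * Y z) ∂μ ≤ Real.exp ((3/4) * l ^ 2 * v) := by
  have hYint : Integrable Y μ := integrable_of_bdd hY hbd
  have hY2int : Integrable (fun z => (Y z) ^ 2) μ :=
    integrable_of_bdd (hY.pow_const 2) (c := C ^ 2) (fun z => by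
      rw [abs_pow, sq_abs]
      have := hbd z; nlinarith [sq_abs (Y z), abs_nonneg (Y z)])
  have hptbd : ∀ z, |l * Y z| ≤ 1 := by
    intro z
    rw [abs_mul, abs_of_nonneg hl]
    calc l * |Y z| ≤ l * C := by
          rcases eq_or_lt_of_le hl with h | h
          · simp [← h]
          · exact mul_le_mul_of_nonneg_left (hbd z) hl
      _ ≤ 1 := hlC
  have hexpint : Integrable (fun z => Real.exp (l * Y z)) μ := by
    refine integrable_of_bdd (by fun_prop) (c := Real.exp 1) (fun z => ?_)
    rw [abs_of_nonneg (Real.exp_pos _).le]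
    exact Real.exp_le_exp.2 ((le_abs_self _).trans (hptbd z))
  have hmono : ∫ z, Real.exp (l * Y z) ∂μ ≤ ∫ z, (1 + l * Y z + (3/4) * (l * Y z) ^ 2) ∂μ := by
    refine integral_mono hexpint ?_ (fun z => exp_le_quad (hptbd z))
    exact (integrable_const 1).add (hYint.const_mul l) |>.add
      (((hY2int.const_mul (l ^ 2)).const_mul (3/4)).congr
        (Filter.Eventually.of_forall fun z => by ring))
  have hcalc : ∫ z, (1 + l * Y z + (3/4) * (l * Y z) ^ 2) ∂μ = 1 + (3/4) * l ^ 2 * ∫ z, (Y z) ^ 2 ∂μ := by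
    have e1 : ∀ z, (1 : ℝ) + l * Y z + (3/4) * (l * Y z) ^ 2
        = 1 + l * Y z + ((3/4) * l ^ 2) * (Y z) ^ 2 := fun z => by ring
    simp only [e1]
    have hint1 : Integrable (fun z => 1 + l * Y z) μ := by exact (integrable_const 1).add (hYint.const_mul l)
    have hint2 : Integrable (fun z => 3 / 4 * l ^ 2 * Y z ^ 2) μ := hY2int.const_mul _
    rw [integral_add hint1 hint2, integral_add (integrable_const 1) (hYint.const_mul l),
      integral_const_mul, integral_const_mul, hmean]
    simp
  calc ∫ z, Real.exp (l * Y z) ∂μ ≤ 1 + (3/4) * l ^ 2 * ∫ z, (Y z) ^ 2 ∂μ := hmono.trans_eq hcalc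
    _ ≤ 1 + (3/4) * l ^ 2 * v := by nlinarith [sq_nonneg l]
    _ ≤ Real.exp ((3/4) * l ^ 2 * v) := by
        have := Real.add_one_le_exp ((3/4) * l ^ 2 * v); linarith

lemma chernoff_pi {Z : Type*} [MeasurableSpace Z] (μ : Measure Z) [IsProbabilityMeasure μ]
    {Y : Z → ℝ} (hY : Measurable Y) {C : ℝ} (hC : 0 < C) (hbd : ∀ z, |Y z| ≤ C)
    (hmean : ∫ z, Y z ∂μ = 0) (hvar : ∫ z, (Y z) ^ 2 ∂μ ≤ C ^ 2 / 4)
    (n : ℕ) (hn : 1 ≤ n) {ε : ℝ} (hε0 : 0 < ε) (hε1 : ε ≤ 1) :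
    Measure.pi (fun _ : Fin n => μ) {S : Fin n → Z | (n : ℝ) * (C * ε) ≤ ∑ j, Y (S j)}
      ≤ ENNReal.ofReal (Real.exp (-(n : ℝ) * ε ^ 2 / 2)) := by
  have hCne : C ≠ 0 := ne_of_gt hC
  set l : ℝ := if ε ≤ 3/8 then 8*ε/(3*C) else 1/C with hl_def
  have hl0 : 0 ≤ l := by
    rw [hl_def]; split_ifs <;> positivity
  have htC : l * C = if ε ≤ 3/8 then 8*ε/3 else 1 := by
    rw [hl_def]; split_ifs <;> field_simp <;> ring
  have hlC : l * C ≤ 1 := by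
    rw [htC]; split_ifs with h
    · linarith
    · exact le_refl 1
  have key := mgf_bound μ hY hbd hmean hvar hl0 hlC
  letI : MeasureSpace Z := ⟨μ⟩
  haveI : IsProbabilityMeasure (volume : Measure (Fin n → Z)) :=
    (inferInstance : IsProbabilityMeasure (Measure.pi (fun _ : Fin n => μ)))
  have hpi : Measure.pi (fun _ : Fin n => μ) = (volume : Measure (Fin n → Z)) := rfl
  set F : (Fin n → Z) → ℝ := fun S => ∏ j, Real.exp (l * Y (S j)) with hF_def
  have hexpint : Integrable (fun z => Real.exp (l * Y z)) μ := by
    refine integrable_of_bdd (by fun_prop) (c := Real.exp (l * C)) (fun z => ?_)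
    rw [abs_of_nonneg (Real.exp_pos _).le]
    apply Real.exp_le_exp.2
    calc l * Y z ≤ l * |Y z| := by nlinarith [le_abs_self (Y z)]
      _ ≤ l * C := by nlinarith [hbd z]
  have hFint : Integrable F (volume : Measure (Fin n → Z)) :=
    Integrable.fintype_prod (f := fun _ z => Real.exp (l * Y z)) (fun _ => hexpint)
  have hFnonneg : 0 ≤ᵐ[volume] F := Filter.Eventually.of_forall (fun S => Finset.prod_nonneg
    (fun j _ => (Real.exp_pos _).le))
  have hFval : ∫ S, F S = (∫ z, Real.exp (l * Y z) ∂μ) ^ n := by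
    rw [hF_def]
    show ∫ S, ∏ j, Real.exp (l * Y (S j)) ∂(Measure.pi (fun _ : Fin n => μ)) = _
    rw [MeasureTheory.integral_fintype_prod_eq_pow (fun z => Real.exp (l * Y z))]
    rw [Fintype.card_fin]
  set c0 : ℝ := Real.exp (l * ((n : ℝ) * (C * ε))) with hc0_def
  have hsub : {S : Fin n → Z | (n : ℝ) * (C * ε) ≤ ∑ j, Y (S j)} ⊆ {S | c0 ≤ F S} := by
    intro S hS
    have hFS : F S = Real.exp (l * ∑ j, Y (S j)) := by
      show ∏ j, Real.exp (l * Y (S j)) = _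
      rw [Finset.mul_sum, Real.exp_sum]
    simp only [Set.mem_setOf_eq] at hS ⊢
    rw [hFS, hc0_def]
    exact Real.exp_le_exp.2 (by nlinarith)
  have markov := mul_meas_ge_le_integral_of_nonneg hFnonneg hFint c0
  -- bound the real quantity
  have hB : (∫ z, Real.exp (l * Y z) ∂μ) ^ n ≤ Real.exp ((n : ℝ) * ((3/4) * l ^ 2 * (C ^ 2 / 4))) := by
    rw [Real.exp_nat_mul]
    exact pow_le_pow_left₀ (integral_nonneg (fun z => (Real.exp_pos _).le)) key n
  have hc0pos : 0 < c0 := Real.exp_pos _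
  have htoReal : ((volume : Measure (Fin n → Z)) {S | c0 ≤ F S}).toReal
      ≤ Real.exp ((n : ℝ) * ((3/4) * l ^ 2 * (C ^ 2 / 4))) / c0 := by
    rw [le_div_iff₀ hc0pos]
    calc _ = c0 * ((volume : Measure (Fin n → Z)) {S | c0 ≤ F S}).toReal := by ring
      _ ≤ ∫ S, F S := markov
      _ ≤ _ := hFval.le.trans hB
  have hexp_ineq : Real.exp ((n : ℝ) * ((3/4) * l ^ 2 * (C ^ 2 / 4))) / c0
      ≤ Real.exp (-(n : ℝ) * ε ^ 2 / 2) := by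
    rw [hc0_def, ← Real.exp_sub]
    apply Real.exp_le_exp.2
    have hexpand : (n : ℝ) * ((3/4) * l ^ 2 * (C ^ 2 / 4)) - l * ((n : ℝ) * (C * ε))
        = (n : ℝ) * ((3/16) * (l*C) ^ 2 - (l*C) * ε) := by ring
    rw [hexpand]
    have hnn : (0:ℝ) ≤ (n : ℝ) := Nat.cast_nonneg n
    have hkey : (3/16) * (l*C) ^ 2 - (l*C) * ε ≤ -ε ^ 2 / 2 := by
      rw [htC]; split_ifs with h
      · nlinarith [sq_nonneg ε]
      · push_neg at h; nlinarith
    calc (n : ℝ) * ((3/16) * (l*C) ^ 2 - (l*C) * ε) ≤ (n : ℝ) * (-ε ^ 2 / 2) :=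
          mul_le_mul_of_nonneg_left hkey hnn
      _ = -(n : ℝ) * ε ^ 2 / 2 := by ring
  calc Measure.pi (fun _ : Fin n => μ) {S : Fin n → Z | (n : ℝ) * (C * ε) ≤ ∑ j, Y (S j)}
      ≤ (volume : Measure (Fin n → Z)) {S | c0 ≤ F S} := by
        rw [hpi]; exact measure_mono hsub
    _ = ENNReal.ofReal (((volume : Measure (Fin n → Z)) {S | c0 ≤ F S}).toReal) :=
        (ENNReal.ofReal_toReal (measure_ne_top _ _)).symm
    _ ≤ ENNReal.ofReal (Real.exp (-(n : ℝ) * ε ^ 2 / 2)) :=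
        ENNReal.ofReal_le_ofReal (htoReal.trans hexp_ineq)

lemma hoeffding_onesided {Z : Type*} [MeasurableSpace Z] (μ : Measure Z) [IsProbabilityMeasure μ]
    {ψ : Z → ℝ} (hmeas : Measurable ψ) {C : ℝ} (hC : 0 < C)
    (h0 : ∀ z, 0 ≤ ψ z) (hCb : ∀ z, ψ z ≤ C)
    (n : ℕ) (hn : 1 ≤ n) {ε : ℝ} (hε0 : 0 < ε) :
    Measure.pi (fun _ : Fin n => μ)
      {S : Fin n → Z | C * ε < (∫ z, ψ z ∂μ) - (1 / (n : ℝ)) * ∑ j, ψ (S j)}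
      ≤ ENNReal.ofReal (Real.exp (-(n : ℝ) * ε ^ 2 / 2)) := by
  have hnpos : (0 : ℝ) < n := by exact_mod_cast hn
  set m := ∫ z, ψ z ∂μ with hm_def
  have hψint : Integrable ψ μ :=
    integrable_of_bdd hmeas (c := C) (fun z => by rw [abs_of_nonneg (h0 z)]; exact hCb z)
  have hm0 : 0 ≤ m := integral_nonneg h0
  have hmC : m ≤ C := by
    calc m ≤ ∫ _, C ∂μ := integral_mono hψint (integrable_const C) hCb
      _ = C := by simp
  by_cases hε1 : ε ≤ 1
  · set Y : Z → ℝ := fun z => m - ψ z with hY_def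
    have hYmeas : Measurable Y := measurable_const.sub hmeas
    have hbd : ∀ z, |Y z| ≤ C := fun z => abs_le.2 ⟨by simp only [hY_def]; linarith [hCb z],
      by simp only [hY_def]; linarith [h0 z]⟩
    have hYint : Integrable Y μ := integrable_of_bdd hYmeas hbd
    have hmean : ∫ z, Y z ∂μ = 0 := by
      simp only [hY_def]
      rw [integral_sub (integrable_const m) hψint]
      simp [hm_def]
    have hY2int : Integrable (fun z => Y z ^ 2) μ :=
      integrable_of_bdd (hYmeas.pow_const 2) (c := C ^ 2) (fun z => by
        rw [abs_pow, sq_abs]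
        have := hbd z; nlinarith [sq_abs (Y z), abs_nonneg (Y z)])
    have hvar : ∫ z, Y z ^ 2 ∂μ ≤ C ^ 2 / 4 := by
      have hpt : ∀ z, Y z ^ 2 ≤ C ^ 2 / 4 + (2 * m - C) * Y z := by
        intro z
        simp only [hY_def]
        nlinarith [mul_nonneg (h0 z) (sub_nonneg.2 (hCb z)), sq_nonneg (2 * m - C)]
      calc ∫ z, Y z ^ 2 ∂μ ≤ ∫ z, (C ^ 2 / 4 + (2 * m - C) * Y z) ∂μ :=
            integral_mono hY2int ((integrable_const _).add (hYint.const_mul _)) hpt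
        _ = C ^ 2 / 4 + (2 * m - C) * ∫ z, Y z ∂μ := by
            rw [integral_add (integrable_const _) (hYint.const_mul _), integral_const_mul]
            simp
        _ = C ^ 2 / 4 := by rw [hmean]; ring
    have hsub : {S : Fin n → Z | C * ε < m - (1 / (n : ℝ)) * ∑ j, ψ (S j)}
        ⊆ {S : Fin n → Z | (n : ℝ) * (C * ε) ≤ ∑ j, Y (S j)} := by
      intro S hS
      simp only [Set.mem_setOf_eq] at hS ⊢
      have hsum : ∑ j, Y (S j) = (n : ℝ) * m - ∑ j, ψ (S j) := by
        simp only [hY_def]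
        rw [Finset.sum_sub_distrib, Finset.sum_const]
        simp [mul_comm]
      rw [hsum]
      have := mul_lt_mul_of_pos_left hS hnpos
      rw [mul_sub] at this
      have h2 : (n : ℝ) * ((1 / (n : ℝ)) * ∑ j, ψ (S j)) = ∑ j, ψ (S j) := by
        field_simp
      rw [h2] at this
      linarith
    exact (measure_mono hsub).trans
      (chernoff_pi μ hYmeas hC hbd hmean hvar n hn hε0 hε1)
  · push_neg at hε1
    have hempty : {S : Fin n → Z | C * ε < m - (1 / (n : ℝ)) * ∑ j, ψ (S j)} = ∅ := by
      rw [Set.eq_empty_iff_forall_notMem]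
      intro S hS
      simp only [Set.mem_setOf_eq] at hS
      have hsum0 : 0 ≤ (1 / (n : ℝ)) * ∑ j, ψ (S j) :=
        mul_nonneg (by positivity) (Finset.sum_nonneg fun j _ => h0 (S j))
      nlinarith
    rw [hempty]
    simp

end Aux

section Aux2
open Real

lemma integral_cond_eq {Z : Type*} [MeasurableSpace Z] (μ : Measure Z) (A : Set Z) (f : Z → ℝ) :
    ∫ z, f z ∂(μ[|A]) = (μ A).toReal⁻¹ * ∫ z in A, f z ∂μ := by
  rw [ProbabilityTheory.cond, integral_smul_measure, ENNReal.toReal_inv, smul_eq_mul]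

lemma cond_integral_nonneg {Z : Type*} [MeasurableSpace Z] (μ : Measure Z) (A : Set Z)
    {ℓ : Z → ℝ} (h0 : ∀ z, 0 ≤ ℓ z) : 0 ≤ ∫ z, ℓ z ∂(μ[|A]) :=
  integral_nonneg h0

lemma cond_integral_le {Z : Type*} [MeasurableSpace Z] (μ : Measure Z) (A : Set Z)
    [IsProbabilityMeasure (μ[|A])] {ℓ : Z → ℝ} (hm : Measurable ℓ) {C : ℝ}
    (h0 : ∀ z, 0 ≤ ℓ z) (hC : ∀ z, ℓ z ≤ C) : ∫ z, ℓ z ∂(μ[|A]) ≤ C := by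
  have hint : Integrable ℓ (μ[|A]) :=
    integrable_of_bdd hm (c := C) (fun z => by rw [abs_of_nonneg (h0 z)]; exact hC z)
  calc ∫ z, ℓ z ∂(μ[|A]) ≤ ∫ _, C ∂(μ[|A]) := integral_mono hint (integrable_const C) hC
    _ = C := by simp

lemma cond_integral_close {Z : Type*} [MeasurableSpace Z] {H : Type*} [NormedAddCommGroup H]
    [MeasurableSpace H] [BorelSpace H] {h : Z → H} (hh : Measurable h)
    {ℓ : Z → ℝ} (hℓ : Measurable ℓ) {L C : ℝ}
    (hℓ0 : ∀ z, 0 ≤ ℓ z) (hℓC : ∀ z, ℓ z ≤ C)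
    (hLip : ∀ s u, |ℓ s - ℓ u| ≤ L * ‖h s - h u‖)
    (μ : Measure Z) (A : Set Z) [IsProbabilityMeasure (μ[|A])]
    (hInt : Integrable (fun z => ‖h z‖) (μ[|A])) (s : Z) :
    |(∫ z, ℓ z ∂(μ[|A])) - ℓ s| ≤ L * locRob h μ A s := by
  have hnmeas : Measurable (fun z => ‖h z - h s‖) :=
    ((continuous_id.sub continuous_const).norm.measurable).comp hh
  have hni : Integrable (fun z => ‖h z - h s‖) (μ[|A]) := by
    refine Integrable.mono' (hInt.add (integrable_const ‖h s‖)) hnmeas.aestronglyMeasurable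
      (Filter.Eventually.of_forall fun z => ?_)
    rw [Real.norm_eq_abs, abs_of_nonneg (norm_nonneg _)]
    exact (norm_sub_le _ _)
  have hℓint : Integrable ℓ (μ[|A]) :=
    integrable_of_bdd hℓ (c := C) (fun z => by rw [abs_of_nonneg (hℓ0 z)]; exact hℓC z)
  have heq : (∫ z, ℓ z ∂(μ[|A])) - ℓ s = ∫ z, (ℓ z - ℓ s) ∂(μ[|A]) := by
    rw [integral_sub hℓint (integrable_const _), integral_const]
    simp
  rw [heq, locRob]
  calc |∫ z, (ℓ z - ℓ s) ∂(μ[|A])| ≤ ∫ z, |ℓ z - ℓ s| ∂(μ[|A]) :=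
        by simpa [Real.norm_eq_abs] using
          norm_integral_le_integral_norm (μ := μ[|A]) (fun z => ℓ z - ℓ s)
    _ ≤ ∫ z, L * ‖h z - h s‖ ∂(μ[|A]) :=
        integral_mono (hℓint.sub (integrable_const _)).abs (hni.const_mul L)
          (fun z => hLip z s)
    _ = L * ∫ z, ‖h z - h s‖ ∂(μ[|A]) := integral_const_mul L _

lemma locRob_zero {Z : Type*} [MeasurableSpace Z] {H : Type*} [NormedAddCommGroup H]
    [MeasurableSpace H] [BorelSpace H] {h : Z → H} (hh : Measurable h)
    (μ : Measure Z) (A : Set Z) [IsFiniteMeasure (μ[|A])]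
    (hNot : ¬ Integrable (fun z => ‖h z‖) (μ[|A])) (s : Z) :
    locRob h μ A s = 0 := by
  rw [locRob]
  apply integral_undef
  intro hcon
  apply hNot
  refine Integrable.mono' (hcon.add (integrable_const ‖h s‖)) hh.norm.aestronglyMeasurable
    (Filter.Eventually.of_forall fun z => ?_)
  rw [Real.norm_eq_abs, abs_of_nonneg (norm_nonneg _)]
  have := norm_sub_norm_le (h z) (h s)
  simp only [Pi.add_apply]
  linarith

lemma sum_indicator_eq {Z : Type*} {K : ℕ} {Zpart : Fin K → Set Z}
    (hZdisj : Pairwise (Function.onFun Disjoint Zpart)) {i : Fin K} {z : Z} (hz : z ∈ Zpart i)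
    (v : Fin K → Z → ℝ) :
    ∑ i', (Zpart i').indicator (v i') z = v i z := by
  rw [Finset.sum_eq_single i]
  · exact Set.indicator_of_mem hz _
  · intro i' _ hne
    exact Set.indicator_of_notMem
      (fun hz' => absurd hz (Set.disjoint_left.1 (hZdisj hne) hz')) _
  · intro hmem; exact absurd (Finset.mem_univ i) hmem

lemma integral_piecewise_eq {Z : Type*} [MeasurableSpace Z] {K : ℕ} {Zpart : Fin K → Set Z}
    (hZmeas : ∀ i, MeasurableSet (Zpart i)) (hZdisj : Pairwise (Function.onFun Disjoint Zpart))
    (hZcover : ⋃ i, Zpart i = Set.univ)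
    (μ : Measure Z) [IsProbabilityMeasure μ] (hμpos : ∀ i, 0 < μ (Zpart i))
    {ℓ : Z → ℝ} (hℓm : Measurable ℓ) {C : ℝ} (hℓ0 : ∀ z, 0 ≤ ℓ z) (hℓC : ∀ z, ℓ z ≤ C)
    (Good : Fin K → Prop) [DecidablePred Good] :
    ∫ z, (∑ i, (Zpart i).indicator
        (fun z' => if Good i then ∫ w, ℓ w ∂(μ[|Zpart i]) else ℓ z') z) ∂μ
      = ∫ z, ℓ z ∂μ := by
  have hℓint : Integrable ℓ μ :=
    integrable_of_bdd hℓm (c := C) (fun z => by rw [abs_of_nonneg (hℓ0 z)]; exact hℓC z)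
  have hCnn : 0 ≤ C := le_trans (hℓ0 (Classical.choice (by
    by_contra hne
    have : (⋃ i, Zpart i) = ∅ := by
      rw [Set.eq_empty_iff_forall_notMem]; intro z _; exact hne ⟨z⟩
    rw [hZcover] at this
    have h1 : μ Set.univ = 1 := measure_univ
    rw [this] at h1; simp at h1))) (hℓC _)
  have hviint : ∀ i : Fin K, Integrable
      ((Zpart i).indicator (fun z' => if Good i then ∫ w, ℓ w ∂(μ[|Zpart i]) else ℓ z')) μ := by
    intro i
    refine Integrable.indicator ?_ (hZmeas i)
    by_cases hg : Good i
    · simp only [hg, if_true]; exact integrable_const _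
    · simp only [hg, if_false]; exact hℓint
  rw [integral_finset_sum _ (fun i _ => hviint i)]
  have hterm : ∀ i : Fin K,
      ∫ z, (Zpart i).indicator
        (fun z' => if Good i then ∫ w, ℓ w ∂(μ[|Zpart i]) else ℓ z') z ∂μ
      = ∫ z in Zpart i, ℓ z ∂μ := by
    intro i
    rw [integral_indicator (hZmeas i)]
    by_cases hg : Good i
    · simp only [hg, if_true]
      rw [setIntegral_const, integral_cond_eq, smul_eq_mul, measureReal_def]
      rw [← mul_assoc, mul_inv_cancel₀, one_mul]
      exact ENNReal.toReal_ne_zero.2 ⟨(hμpos i).ne', measure_ne_top μ _⟩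
    · simp only [hg, if_false]
  simp only [hterm]
  have := MeasureTheory.integral_iUnion hZmeas hZdisj (hℓint.integrableOn (s := ⋃ i, Zpart i))
  rw [hZcover, Measure.restrict_univ, tsum_fintype] at this
  exact this.symm

lemma sum_indicator_idx {Z : Type*} {m : ℕ} (S : Fin m → Z) (A : Set Z) (f : Z → ℝ)
    [DecidablePred (· ∈ A)] :
    ∑ j, A.indicator f (S j) = ∑ j ∈ idxIn S A, f (S j) := by
  classical
  rw [Finset.sum_indicator_eq_sum_filter]
  apply Finset.sum_congr _ (fun j _ => rfl)
  ext j
  simp [idxIn]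

end Aux2

set_option maxHeartbeats 2000000 in
theorem generalization_bound_real_and_synthetic {Z : Type*} [MeasurableSpace Z] {H : Type*} [NormedAddCommGroup H]
    [NormedSpace ℝ H] [MeasurableSpace H] [BorelSpace H]
    (K : ℕ) (hK : 1 ≤ K) (Zpart : Fin K → Set Z)
    (hZmeas : ∀ i, MeasurableSet (Zpart i))
    (hZne : ∀ i, (Zpart i).Nonempty)
    (hZdisj : Pairwise (Function.onFun Disjoint Zpart))
    (hZcover : ⋃ i, Zpart i = Set.univ)
    (h : Z → H) (hh : Measurable h)
    (ℓ : Z → ℝ) (hℓ : Measurable ℓ) (L C : ℝ)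
    (hℓ0 : ∀ z, 0 ≤ ℓ z) (hℓC : ∀ z, ℓ z ≤ C)
    (hLip : ∀ s u, |ℓ s - ℓ u| ≤ L * ‖h s - h u‖)
    (P0 Pg : Measure Z) [IsProbabilityMeasure P0] [IsProbabilityMeasure Pg]
    (hP0 : ∀ i, 0 < P0 (Zpart i)) (hPg : ∀ i, 0 < Pg (Zpart i))
    (n g : ℕ) (hn : 1 ≤ n) (hg : 1 ≤ g) (δ : ℝ) (hδ : 0 < δ) :
    1 - ENNReal.ofReal δ ≤
      ((Measure.pi (fun _ : Fin n => P0)).prod (Measure.pi (fun _ : Fin g => Pg)))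
        {SG : (Fin n → Z) × (Fin g → Z) |
          (∀ j, SG.2 j ∈ ⋃ i ∈ TS Zpart SG.1, Zpart i) →
          (∀ i ∈ TS Zpart SG.1, 0 < (idxIn SG.2 (Zpart i)).card) →
          ∫ z, ℓ z ∂P0 ≤
            L * ∑ i ∈ TS Zpart SG.1,
                ((idxIn SG.2 (Zpart i)).card : ℝ) / (g : ℝ)
                  * (disc h SG.2 (idxIn SG.2 (Zpart i)) SG.1 (idxIn SG.1 (Zpart i))
                     + tupRob h Pg (Zpart i) SG.2 (idxIn SG.2 (Zpart i)))
            + (∫ z, ℓ z ∂Pg)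
            + ∑ i ∈ TS Zpart SG.1,
                (((idxIn SG.1 (Zpart i)).card : ℝ) / (n : ℝ)
                  - ((idxIn SG.2 (Zpart i)).card : ℝ) / (g : ℝ))
                  * empLoss ℓ SG.1 (idxIn SG.1 (Zpart i))
            + L * ∑ i ∈ TS Zpart SG.1,
                ((idxIn SG.1 (Zpart i)).card : ℝ) / (n : ℝ)
                  * tupRob h P0 (Zpart i) SG.1 (idxIn SG.1 (Zpart i))
            + C * (1 / Real.sqrt n + 1 / Real.sqrt g)
                * Real.sqrt (2 * K * Real.log 2 + 2 * Real.log (2 / δ))} := by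
  classical
  set μpr := ((Measure.pi (fun _ : Fin n => P0)).prod (Measure.pi (fun _ : Fin g => Pg))) with hμpr
  -- some positivity basics
  have hnpos : (0:ℝ) < n := by exact_mod_cast hn
  have hgpos : (0:ℝ) < g := by exact_mod_cast hg
  obtain ⟨z0, _⟩ := hZne ⟨0, hK⟩
  have hC0 : 0 ≤ C := le_trans (hℓ0 z0) (hℓC z0)
  -- pointwise cover
  have hcoverpt : ∀ z : Z, ∃ i, z ∈ Zpart i := by
    intro z
    have : z ∈ ⋃ i, Zpart i := hZcover ▸ Set.mem_univ z
    exact Set.mem_iUnion.1 this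
  -- membership in idxIn
  have hmemidx : ∀ {m : ℕ} (S : Fin m → Z) (i : Fin K) (j : Fin m),
      j ∈ idxIn S (Zpart i) ↔ S j ∈ Zpart i := by
    intro m S i j; simp [idxIn]
  -- trivial case : δ ≥ 2
  by_cases hδ2 : 2 ≤ δ
  · have h1 : (1 : ENNReal) - ENNReal.ofReal δ = 0 :=
      tsub_eq_zero_of_le (ENNReal.one_le_ofReal.2 (by linarith))
    rw [h1]; exact zero_le
  push_neg at hδ2
  -- define the "target" set
  set Target : Set ((Fin n → Z) × (Fin g → Z)) :=
    {SG : (Fin n → Z) × (Fin g → Z) |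
          (∀ j, SG.2 j ∈ ⋃ i ∈ TS Zpart SG.1, Zpart i) →
          (∀ i ∈ TS Zpart SG.1, 0 < (idxIn SG.2 (Zpart i)).card) →
          ∫ z, ℓ z ∂P0 ≤
            L * ∑ i ∈ TS Zpart SG.1,
                ((idxIn SG.2 (Zpart i)).card : ℝ) / (g : ℝ)
                  * (disc h SG.2 (idxIn SG.2 (Zpart i)) SG.1 (idxIn SG.1 (Zpart i))
                     + tupRob h Pg (Zpart i) SG.2 (idxIn SG.2 (Zpart i)))
            + (∫ z, ℓ z ∂Pg)
            + ∑ i ∈ TS Zpart SG.1,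
                (((idxIn SG.1 (Zpart i)).card : ℝ) / (n : ℝ)
                  - ((idxIn SG.2 (Zpart i)).card : ℝ) / (g : ℝ))
                  * empLoss ℓ SG.1 (idxIn SG.1 (Zpart i))
            + L * ∑ i ∈ TS Zpart SG.1,
                ((idxIn SG.1 (Zpart i)).card : ℝ) / (n : ℝ)
                  * tupRob h P0 (Zpart i) SG.1 (idxIn SG.1 (Zpart i))
            + C * (1 / Real.sqrt n + 1 / Real.sqrt g)
                * Real.sqrt (2 * K * Real.log 2 + 2 * Real.log (2 / δ))} with hTarget
  show 1 - ENNReal.ofReal δ ≤ μpr Target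
  -- case C = 0 : the loss is identically zero and the bound is trivial
  by_cases hCz : C = 0
  · have hℓz : ∀ z, ℓ z = 0 := fun z => le_antisymm (hCz ▸ hℓC z) (hℓ0 z)
    have hTuniv : Target = Set.univ := by
      rw [hTarget, Set.eq_univ_iff_forall]
      intro SG _ _
      have hint0 : ∫ z, ℓ z ∂P0 = 0 := by
        simp only [hℓz]; exact integral_zero _ _
      have hintg : ∫ z, ℓ z ∂Pg = 0 := by
        simp only [hℓz]; exact integral_zero _ _
      have hemp : ∀ (m : ℕ) (S : Fin m → Z) (B : Finset (Fin m)), empLoss ℓ S B = 0 := by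
        intro m S B; simp [empLoss, hℓz]
      -- the L-terms are each of the form L * (sum of nonneg) ; handle sign of L
      have hLd : ∀ i ∈ TS Zpart SG.1,
          0 ≤ L * (((idxIn SG.2 (Zpart i)).card : ℝ) / (g : ℝ)
            * (disc h SG.2 (idxIn SG.2 (Zpart i)) SG.1 (idxIn SG.1 (Zpart i))
               + tupRob h Pg (Zpart i) SG.2 (idxIn SG.2 (Zpart i)))) := by
        intro i _
        by_cases hL : 0 ≤ L
        · have h1 : 0 ≤ disc h SG.2 (idxIn SG.2 (Zpart i)) SG.1 (idxIn SG.1 (Zpart i)) := by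
            apply mul_nonneg (by positivity)
            exact Finset.sum_nonneg fun u _ => Finset.sum_nonneg fun s _ => norm_nonneg _
          have h2 : 0 ≤ tupRob h Pg (Zpart i) SG.2 (idxIn SG.2 (Zpart i)) := by
            apply mul_nonneg (by positivity)
            exact Finset.sum_nonneg fun u _ => integral_nonneg fun z => norm_nonneg _
          positivity
        · push_neg at hL
          have hzero : ∀ s u : Z, ‖h s - h u‖ = 0 := by
            intro s u
            by_contra hne
            have hpos : 0 < ‖h s - h u‖ := lt_of_le_of_ne (norm_nonneg _) (Ne.symm hne)
            have := hLip s u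
            rw [hℓz, hℓz] at this
            simp only [sub_zero, abs_zero] at this
            nlinarith
          have h1 : disc h SG.2 (idxIn SG.2 (Zpart i)) SG.1 (idxIn SG.1 (Zpart i)) = 0 := by
            simp [disc, hzero]
          have h2 : tupRob h Pg (Zpart i) SG.2 (idxIn SG.2 (Zpart i)) = 0 := by
            simp only [tupRob]
            rw [Finset.sum_eq_zero, mul_zero]
            intro u _
            simp [locRob, hzero]
          rw [h1, h2]; simp
      have hLr : ∀ i ∈ TS Zpart SG.1,
          0 ≤ L * (((idxIn SG.1 (Zpart i)).card : ℝ) / (n : ℝ)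
            * tupRob h P0 (Zpart i) SG.1 (idxIn SG.1 (Zpart i))) := by
        intro i _
        by_cases hL : 0 ≤ L
        · have h2 : 0 ≤ tupRob h P0 (Zpart i) SG.1 (idxIn SG.1 (Zpart i)) := by
            apply mul_nonneg (by positivity)
            exact Finset.sum_nonneg fun u _ => integral_nonneg fun z => norm_nonneg _
          positivity
        · push_neg at hL
          have hzero : ∀ s u : Z, ‖h s - h u‖ = 0 := by
            intro s u
            by_contra hne
            have hpos : 0 < ‖h s - h u‖ := lt_of_le_of_ne (norm_nonneg _) (Ne.symm hne)
            have := hLip s u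
            rw [hℓz, hℓz] at this
            simp only [sub_zero, abs_zero] at this
            nlinarith
          have h2 : tupRob h P0 (Zpart i) SG.1 (idxIn SG.1 (Zpart i)) = 0 := by
            simp only [tupRob]
            rw [Finset.sum_eq_zero, mul_zero]
            intro u _
            simp [locRob, hzero]
          rw [h2]; simp
      have hs1 : 0 ≤ L * ∑ i ∈ TS Zpart SG.1,
          ((idxIn SG.2 (Zpart i)).card : ℝ) / (g : ℝ)
            * (disc h SG.2 (idxIn SG.2 (Zpart i)) SG.1 (idxIn SG.1 (Zpart i))
               + tupRob h Pg (Zpart i) SG.2 (idxIn SG.2 (Zpart i))) := by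
        rw [Finset.mul_sum]; exact Finset.sum_nonneg hLd
      have hs2 : 0 ≤ L * ∑ i ∈ TS Zpart SG.1,
          ((idxIn SG.1 (Zpart i)).card : ℝ) / (n : ℝ)
            * tupRob h P0 (Zpart i) SG.1 (idxIn SG.1 (Zpart i)) := by
        rw [Finset.mul_sum]; exact Finset.sum_nonneg hLr
      have hs3 : ∑ i ∈ TS Zpart SG.1,
          (((idxIn SG.1 (Zpart i)).card : ℝ) / (n : ℝ)
            - ((idxIn SG.2 (Zpart i)).card : ℝ) / (g : ℝ))
            * empLoss ℓ SG.1 (idxIn SG.1 (Zpart i)) = 0 := by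
        apply Finset.sum_eq_zero; intro i _; rw [hemp]; ring
      have hs4 : 0 ≤ C * (1 / Real.sqrt n + 1 / Real.sqrt g)
          * Real.sqrt (2 * K * Real.log 2 + 2 * Real.log (2 / δ)) := by positivity
      rw [hint0, hintg, hs3]
      linarith
    rw [hTuniv]
    have : μpr Set.univ = 1 := measure_univ
    rw [this]
    exact tsub_le_self.trans (le_refl 1)
  have hCpos : 0 < C := lt_of_le_of_ne hC0 (Ne.symm hCz)
  -- the concentration levels
  set E : ℝ := 2 * K * Real.log 2 + 2 * Real.log (2 / δ) with hE_def
  have hlog2 : 0 < Real.log 2 := Real.log_pos (by norm_num)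
  have hlogδ : 0 ≤ Real.log (2 / δ) := Real.log_nonneg (by rw [le_div_iff₀ hδ]; linarith)
  have hK1 : (1:ℝ) ≤ K := by exact_mod_cast hK
  have hE : 0 < E := by rw [hE_def]; nlinarith
  set εn : ℝ := Real.sqrt E / Real.sqrt n with hεn_def
  set εg : ℝ := Real.sqrt E / Real.sqrt g with hεg_def
  have hεnpos : 0 < εn := div_pos (Real.sqrt_pos.2 hE) (Real.sqrt_pos.2 hnpos)
  have hεgpos : 0 < εg := div_pos (Real.sqrt_pos.2 hE) (Real.sqrt_pos.2 hgpos)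
  -- conditional measures are probability measures
  have hcond0 : ∀ i, IsProbabilityMeasure (P0[|Zpart i]) :=
    fun i => ProbabilityTheory.cond_isProbabilityMeasure (hP0 i).ne'
  have hcondg : ∀ i, IsProbabilityMeasure (Pg[|Zpart i]) :=
    fun i => ProbabilityTheory.cond_isProbabilityMeasure (hPg i).ne'
  -- good regions
  set Good0 : Fin K → Prop := fun i => Integrable (fun z => ‖h z‖) (P0[|Zpart i]) with hGood0
  set Goodg : Fin K → Prop := fun i => Integrable (fun z => ‖h z‖) (Pg[|Zpart i]) with hGoodg
  set c0f : Fin K → ℝ := fun i => ∫ w, ℓ w ∂(P0[|Zpart i]) with hc0f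
  set cgf : Fin K → ℝ := fun i => ∫ w, ℓ w ∂(Pg[|Zpart i]) with hcgf
  set ψ0 : Z → ℝ := fun z => ∑ i, (Zpart i).indicator
      (fun z' => if Good0 i then c0f i else ℓ z') z with hψ0
  set ψg : Z → ℝ := fun z => ∑ i, (Zpart i).indicator
      (fun z' => if Goodg i then cgf i else ℓ z') z with hψg
  have hψ0meas : Measurable ψ0 := by
    rw [hψ0]
    apply Finset.measurable_sum
    intro i _
    refine Measurable.indicator ?_ (hZmeas i)
    by_cases hgi : Good0 i
    · simp only [hgi, if_true]; exact measurable_const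
    · simp only [hgi, if_false]; exact hℓ
  have hψgmeas : Measurable ψg := by
    rw [hψg]
    apply Finset.measurable_sum
    intro i _
    refine Measurable.indicator ?_ (hZmeas i)
    by_cases hgi : Goodg i
    · simp only [hgi, if_true]; exact measurable_const
    · simp only [hgi, if_false]; exact hℓ
  have hc0mem : ∀ i, 0 ≤ c0f i ∧ c0f i ≤ C := by
    intro i
    haveI := hcond0 i
    exact ⟨cond_integral_nonneg P0 (Zpart i) hℓ0, cond_integral_le P0 (Zpart i) hℓ hℓ0 hℓC⟩
  have hcgmem : ∀ i, 0 ≤ cgf i ∧ cgf i ≤ C := by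
    intro i
    haveI := hcondg i
    exact ⟨cond_integral_nonneg Pg (Zpart i) hℓ0, cond_integral_le Pg (Zpart i) hℓ hℓ0 hℓC⟩
  have hψ0at : ∀ (i : Fin K) (z : Z), z ∈ Zpart i → ψ0 z = if Good0 i then c0f i else ℓ z := by
    intro i z hz
    rw [hψ0]
    exact sum_indicator_eq hZdisj hz (fun i' z' => if Good0 i' then c0f i' else ℓ z')
  have hψgat : ∀ (i : Fin K) (z : Z), z ∈ Zpart i → ψg z = if Goodg i then cgf i else ℓ z := by
    intro i z hz
    rw [hψg]
    exact sum_indicator_eq hZdisj hz (fun i' z' => if Goodg i' then cgf i' else ℓ z')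
  have hψ0mem : ∀ z, 0 ≤ ψ0 z ∧ ψ0 z ≤ C := by
    intro z
    obtain ⟨i, hi⟩ := hcoverpt z
    rw [hψ0at i z hi]
    by_cases hgi : Good0 i
    · simp only [hgi, if_true]; exact hc0mem i
    · simp only [hgi, if_false]; exact ⟨hℓ0 z, hℓC z⟩
  have hψgmem : ∀ z, 0 ≤ ψg z ∧ ψg z ≤ C := by
    intro z
    obtain ⟨i, hi⟩ := hcoverpt z
    rw [hψgat i z hi]
    by_cases hgi : Goodg i
    · simp only [hgi, if_true]; exact hcgmem i
    · simp only [hgi, if_false]; exact ⟨hℓ0 z, hℓC z⟩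
  have hEψ0 : ∫ z, ψ0 z ∂P0 = ∫ z, ℓ z ∂P0 :=
    integral_piecewise_eq hZmeas hZdisj hZcover P0 hP0 hℓ hℓ0 hℓC Good0
  have hEψg : ∫ z, ψg z ∂Pg = ∫ z, ℓ z ∂Pg :=
    integral_piecewise_eq hZmeas hZdisj hZcover Pg hPg hℓ hℓ0 hℓC Goodg
  -- the two bad events
  set A0 : Set (Fin n → Z) :=
    {S : Fin n → Z | C * εn < (∫ z, ψ0 z ∂P0) - (1 / (n : ℝ)) * ∑ j, ψ0 (S j)} with hA0_def
  set B0 : Set (Fin g → Z) :=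
    {G : Fin g → Z | C * εg < (1 / (g : ℝ)) * ∑ j, ψg (G j) - (∫ z, ψg z ∂Pg)} with hB0_def
  -- probability bounds
  have hexp_le : ∀ m : ℕ, (1 ≤ m) → Real.exp (-(m:ℝ) * (Real.sqrt E / Real.sqrt m) ^ 2 / 2)
      ≤ δ / 2 := by
    intro m hm
    have hmpos : (0:ℝ) < m := by exact_mod_cast hm
    have h1 : ((Real.sqrt E / Real.sqrt m) ^ 2) = E / m := by
      rw [div_pow, Real.sq_sqrt hE.le, Real.sq_sqrt hmpos.le]
    have h2 : -(m:ℝ) * (E / m) / 2 = -(E / 2) := by field_simp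
    rw [h1, h2]
    have h3 : -(E / 2) = -((K:ℝ) * Real.log 2) + -(Real.log (2 / δ)) := by
      rw [hE_def]; ring
    rw [h3, Real.exp_add]
    have h4 : Real.exp (-((K:ℝ) * Real.log 2)) ≤ 1 :=
      Real.exp_le_one_iff.2 (by nlinarith)
    have h5 : Real.exp (-Real.log (2 / δ)) = δ / 2 := by
      rw [Real.exp_neg, Real.exp_log (by positivity)]
      rw [inv_div]
    rw [h5]
    calc Real.exp (-((K:ℝ) * Real.log 2)) * (δ / 2) ≤ 1 * (δ / 2) :=
          mul_le_mul_of_nonneg_right h4 (by linarith)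
      _ = δ / 2 := one_mul _
  have hPA0 : Measure.pi (fun _ : Fin n => P0) A0 ≤ ENNReal.ofReal (δ / 2) := by
    refine le_trans (hoeffding_onesided P0 hψ0meas hCpos (fun z => (hψ0mem z).1)
      (fun z => (hψ0mem z).2) n hn hεnpos) ?_
    exact ENNReal.ofReal_le_ofReal (hexp_le n hn)
  have hPB0 : Measure.pi (fun _ : Fin g => Pg) B0 ≤ ENNReal.ofReal (δ / 2) := by
    have hset : B0 = {G : Fin g → Z | C * εg <
        (∫ z, (C - ψg z) ∂Pg) - (1 / (g : ℝ)) * ∑ j, (C - ψg (G j))} := by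
      rw [hB0_def]
      ext G
      simp only [Set.mem_setOf_eq]
      have hψgint : Integrable ψg Pg := integrable_of_bdd hψgmeas (c := C)
        (fun z => by rw [abs_of_nonneg (hψgmem z).1]; exact (hψgmem z).2)
      have e1 : ∫ z, (C - ψg z) ∂Pg = C - ∫ z, ψg z ∂Pg := by
        rw [integral_sub (integrable_const C) hψgint]; simp
      have e2 : (1 / (g : ℝ)) * ∑ j, (C - ψg (G j)) = C - (1 / (g : ℝ)) * ∑ j, ψg (G j) := by
        rw [Finset.sum_sub_distrib, Finset.sum_const]
        simp only [Finset.card_univ, Fintype.card_fin, nsmul_eq_mul]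
        field_simp
      rw [e1, e2]
      constructor <;> intro hx <;> linarith
    rw [hset]
    refine le_trans (hoeffding_onesided Pg (measurable_const.sub hψgmeas) hCpos
      (fun z => by simp only [Pi.sub_apply]; linarith [(hψgmem z).2]) (fun z => by simp only [Pi.sub_apply]; linarith [(hψgmem z).1])
      g hg hεgpos) ?_
    exact ENNReal.ofReal_le_ofReal (hexp_le g hg)
  -- deterministic implication on the good event
  have hincl : (Prod.fst ⁻¹' A0)ᶜ ∩ (Prod.snd ⁻¹' B0)ᶜ ⊆ Target := by
    rintro ⟨S, G⟩ ⟨hSA, hSB⟩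
    simp only [Set.mem_compl_iff, Set.mem_preimage, hA0_def, hB0_def,
      Set.mem_setOf_eq, not_lt] at hSA hSB
    rw [hTarget]
    intro hG1 hG2
    simp only at hG1 hG2 ⊢
    set T := TS Zpart S with hT_def
    -- index sets partition
    have hTne : ∀ i ∈ T, (idxIn S (Zpart i)).Nonempty := by
      intro i hi; simpa [hT_def, TS] using hi
    have hToff : ∀ i, i ∉ T → idxIn S (Zpart i) = ∅ := by
      intro i hi
      rw [← Finset.not_nonempty_iff_eq_empty]
      intro hne; exact hi (by simpa [hT_def, TS] using hne)
    have hGoff : ∀ i, i ∉ T → idxIn G (Zpart i) = ∅ := by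
      intro i hi
      rw [Finset.eq_empty_iff_forall_notMem]
      intro j hj
      rw [hmemidx G i j] at hj
      obtain ⟨i', hi', hmem⟩ := Set.mem_iUnion₂.1 (hG1 j)
      have hne : i ≠ i' := fun hh => hi (hh ▸ hi')
      exact Set.disjoint_left.1 (hZdisj hne) hj hmem
    -- positive cardinalities on T
    have hncard : ∀ i ∈ T, 0 < ((idxIn S (Zpart i)).card : ℝ) := by
      intro i hi; exact_mod_cast Finset.card_pos.2 (hTne i hi)
    have hgcard : ∀ i ∈ T, 0 < ((idxIn G (Zpart i)).card : ℝ) := by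
      intro i hi; exact_mod_cast hG2 i hi
    -- decomposition of the empirical ψ0 sum
    have hsumS : ∑ j, ψ0 (S j) = ∑ i ∈ T, ((idxIn S (Zpart i)).card : ℝ)
        * (if Good0 i then c0f i else empLoss ℓ S (idxIn S (Zpart i))) := by
      have e1 : ∑ j, ψ0 (S j) = ∑ i : Fin K, ∑ j, (Zpart i).indicator
          (fun z' => if Good0 i then c0f i else ℓ z') (S j) := by
        rw [Finset.sum_comm]
      have e2 : ∀ i : Fin K, ∑ j, (Zpart i).indicator
          (fun z' => if Good0 i then c0f i else ℓ z') (S j)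
          = ((idxIn S (Zpart i)).card : ℝ)
            * (if Good0 i then c0f i else empLoss ℓ S (idxIn S (Zpart i))) := by
        intro i
        rw [sum_indicator_idx]
        by_cases hgi : Good0 i
        · simp only [hgi, if_true, Finset.sum_const, nsmul_eq_mul]
        · simp only [hgi, if_false, empLoss]
          rcases Nat.eq_zero_or_pos (idxIn S (Zpart i)).card with hc | hc
          · rw [Finset.card_eq_zero.1 hc]; simp
          · have hcne : ((idxIn S (Zpart i)).card : ℝ) ≠ 0 := by
              exact_mod_cast hc.ne'
            rw [← mul_assoc, mul_inv_cancel₀ hcne, one_mul]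
      rw [e1]
      rw [Finset.sum_congr rfl (fun i _ => e2 i)]
      symm
      apply Finset.sum_subset (Finset.subset_univ T)
      intro i _ hi
      rw [hToff i hi]
      simp
    -- decomposition of the empirical ψg sum
    have hsumG : ∑ j, ψg (G j) = ∑ i ∈ T, ((idxIn G (Zpart i)).card : ℝ)
        * (if Goodg i then cgf i else empLoss ℓ G (idxIn G (Zpart i))) := by
      have e1 : ∑ j, ψg (G j) = ∑ i : Fin K, ∑ j, (Zpart i).indicator
          (fun z' => if Goodg i then cgf i else ℓ z') (G j) := by
        rw [Finset.sum_comm]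
      have e2 : ∀ i : Fin K, ∑ j, (Zpart i).indicator
          (fun z' => if Goodg i then cgf i else ℓ z') (G j)
          = ((idxIn G (Zpart i)).card : ℝ)
            * (if Goodg i then cgf i else empLoss ℓ G (idxIn G (Zpart i))) := by
        intro i
        rw [sum_indicator_idx]
        by_cases hgi : Goodg i
        · simp only [hgi, if_true, Finset.sum_const, nsmul_eq_mul]
        · simp only [hgi, if_false, empLoss]
          rcases Nat.eq_zero_or_pos (idxIn G (Zpart i)).card with hc | hc
          · rw [Finset.card_eq_zero.1 hc]; simp
          · have hcne : ((idxIn G (Zpart i)).card : ℝ) ≠ 0 := by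
              exact_mod_cast hc.ne'
            rw [← mul_assoc, mul_inv_cancel₀ hcne, one_mul]
      rw [e1]
      rw [Finset.sum_congr rfl (fun i _ => e2 i)]
      symm
      apply Finset.sum_subset (Finset.subset_univ T)
      intro i _ hi
      rw [hGoff i hi]
      simp
    -- the S-side concentration consequence
    have hbar0 : ∫ z, ℓ z ∂P0 ≤ (∑ i ∈ T, (((idxIn S (Zpart i)).card : ℝ) / (n : ℝ))
        * (if Good0 i then c0f i else empLoss ℓ S (idxIn S (Zpart i)))) + C * εn := by
      have h1 : (1 / (n : ℝ)) * ∑ j, ψ0 (S j)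
          = ∑ i ∈ T, (((idxIn S (Zpart i)).card : ℝ) / (n : ℝ))
            * (if Good0 i then c0f i else empLoss ℓ S (idxIn S (Zpart i))) := by
        rw [hsumS, Finset.mul_sum]
        exact Finset.sum_congr rfl fun i _ => by ring
      rw [← hEψ0]
      linarith [hSA, h1]
    -- the G-side concentration consequence
    have hstep7 : ∑ i ∈ T, (((idxIn G (Zpart i)).card : ℝ) / (g : ℝ))
        * (if Goodg i then cgf i else empLoss ℓ G (idxIn G (Zpart i)))
        ≤ (∫ z, ℓ z ∂Pg) + C * εg := by
      have h1 : (1 / (g : ℝ)) * ∑ j, ψg (G j)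
          = ∑ i ∈ T, (((idxIn G (Zpart i)).card : ℝ) / (g : ℝ))
            * (if Goodg i then cgf i else empLoss ℓ G (idxIn G (Zpart i))) := by
        rw [hsumG, Finset.mul_sum]
        exact Finset.sum_congr rfl fun i _ => by ring
      rw [hEψg] at hSB
      linarith [hSB, h1]
    -- step 4 : per-region bound on the S side
    have hstep4 : ∀ i ∈ T, (if Good0 i then c0f i else empLoss ℓ S (idxIn S (Zpart i)))
        ≤ empLoss ℓ S (idxIn S (Zpart i))
          + L * tupRob h P0 (Zpart i) S (idxIn S (Zpart i)) := by
      intro i hi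
      have hcard := hncard i hi
      have hcne : ((idxIn S (Zpart i)).card : ℝ) ≠ 0 := ne_of_gt hcard
      by_cases hgi : Good0 i
      · rw [if_pos hgi]
        haveI := hcond0 i
        have hpt : ∀ j ∈ idxIn S (Zpart i),
            c0f i ≤ ℓ (S j) + L * locRob h P0 (Zpart i) (S j) := by
          intro j _
          have habs := cond_integral_close hh hℓ hℓ0 hℓC hLip P0 (Zpart i) hgi (S j)
          have h2 := (abs_le.1 habs).2
          rw [hc0f]
          simp only at h2 ⊢
          linarith
        have hsum := Finset.sum_le_sum hpt
        rw [Finset.sum_const, nsmul_eq_mul, Finset.sum_add_distrib, ← Finset.mul_sum] at hsum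
        rw [empLoss, tupRob]
        calc c0f i = ((idxIn S (Zpart i)).card : ℝ)⁻¹
              * (((idxIn S (Zpart i)).card : ℝ) * c0f i) := by field_simp
          _ ≤ ((idxIn S (Zpart i)).card : ℝ)⁻¹
              * (∑ j ∈ idxIn S (Zpart i), ℓ (S j)
                + L * ∑ j ∈ idxIn S (Zpart i), locRob h P0 (Zpart i) (S j)) :=
            mul_le_mul_of_nonneg_left hsum (by positivity)
          _ = ((idxIn S (Zpart i)).card : ℝ)⁻¹ * ∑ j ∈ idxIn S (Zpart i), ℓ (S j)
              + L * (((idxIn S (Zpart i)).card : ℝ)⁻¹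
                * ∑ j ∈ idxIn S (Zpart i), locRob h P0 (Zpart i) (S j)) := by ring
      · rw [if_neg hgi]
        have hz : tupRob h P0 (Zpart i) S (idxIn S (Zpart i)) = 0 := by
          haveI := hcond0 i
          rw [tupRob, Finset.sum_eq_zero, mul_zero]
          intro j _
          exact locRob_zero hh P0 (Zpart i) hgi (S j)
        rw [hz, mul_zero, add_zero]
    -- step 6 : per-region bound linking S to G
    have hstep6 : ∀ i ∈ T, empLoss ℓ S (idxIn S (Zpart i)) ≤
        L * (disc h G (idxIn G (Zpart i)) S (idxIn S (Zpart i))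
            + tupRob h Pg (Zpart i) G (idxIn G (Zpart i)))
        + (if Goodg i then cgf i else empLoss ℓ G (idxIn G (Zpart i))) := by
      intro i hi
      have hnc := hncard i hi
      have hgc := hgcard i hi
      have hncne : ((idxIn S (Zpart i)).card : ℝ) ≠ 0 := ne_of_gt hnc
      have hgcne : ((idxIn G (Zpart i)).card : ℝ) ≠ 0 := ne_of_gt hgc
      have h6a : empLoss ℓ S (idxIn S (Zpart i)) ≤ empLoss ℓ G (idxIn G (Zpart i))
          + L * disc h G (idxIn G (Zpart i)) S (idxIn S (Zpart i)) := by
        have hpt : ∀ s ∈ idxIn S (Zpart i), ∀ u ∈ idxIn G (Zpart i),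
            ℓ (S s) ≤ ℓ (G u) + L * ‖h (S s) - h (G u)‖ := by
          intro s _ u _
          have := (abs_le.1 (hLip (S s) (G u))).2
          linarith
        have h1 : ∑ s ∈ idxIn S (Zpart i), ∑ u ∈ idxIn G (Zpart i), ℓ (S s)
            ≤ ∑ s ∈ idxIn S (Zpart i), ∑ u ∈ idxIn G (Zpart i),
              (ℓ (G u) + L * ‖h (S s) - h (G u)‖) :=
          Finset.sum_le_sum (fun s hs => Finset.sum_le_sum (fun u hu => hpt s hs u hu))
        have hL1 : ∑ s ∈ idxIn S (Zpart i), ∑ u ∈ idxIn G (Zpart i), ℓ (S s)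
            = ((idxIn G (Zpart i)).card : ℝ) * ∑ s ∈ idxIn S (Zpart i), ℓ (S s) := by
          rw [Finset.mul_sum]
          apply Finset.sum_congr rfl
          intro s _
          rw [Finset.sum_const, nsmul_eq_mul]
        have hR1 : ∑ s ∈ idxIn S (Zpart i), ∑ u ∈ idxIn G (Zpart i),
              (ℓ (G u) + L * ‖h (S s) - h (G u)‖)
            = ((idxIn S (Zpart i)).card : ℝ) * ∑ u ∈ idxIn G (Zpart i), ℓ (G u)
              + L * ∑ u ∈ idxIn G (Zpart i), ∑ s ∈ idxIn S (Zpart i),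
                  ‖h (S s) - h (G u)‖ := by
          rw [Finset.sum_congr rfl (fun s _ => Finset.sum_add_distrib
            (s := idxIn G (Zpart i)))]
          rw [Finset.sum_add_distrib]
          congr 1
          · rw [Finset.sum_const, nsmul_eq_mul]
          · rw [Finset.sum_comm]
            rw [Finset.mul_sum]
            apply Finset.sum_congr rfl
            intro u _
            rw [Finset.mul_sum]
        rw [hL1, hR1] at h1
        rw [empLoss, empLoss, disc]
        calc ((idxIn S (Zpart i)).card : ℝ)⁻¹ * ∑ s ∈ idxIn S (Zpart i), ℓ (S s)
            = (((idxIn G (Zpart i)).card : ℝ) * ((idxIn S (Zpart i)).card : ℝ))⁻¹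
              * (((idxIn G (Zpart i)).card : ℝ) * ∑ s ∈ idxIn S (Zpart i), ℓ (S s)) := by
              field_simp
          _ ≤ (((idxIn G (Zpart i)).card : ℝ) * ((idxIn S (Zpart i)).card : ℝ))⁻¹
              * (((idxIn S (Zpart i)).card : ℝ) * ∑ u ∈ idxIn G (Zpart i), ℓ (G u)
                + L * ∑ u ∈ idxIn G (Zpart i), ∑ s ∈ idxIn S (Zpart i),
                    ‖h (S s) - h (G u)‖) := by
              apply mul_le_mul_of_nonneg_left h1
              positivity
          _ = ((idxIn G (Zpart i)).card : ℝ)⁻¹ * ∑ u ∈ idxIn G (Zpart i), ℓ (G u)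
              + L * ((((idxIn G (Zpart i)).card : ℝ) * ((idxIn S (Zpart i)).card : ℝ))⁻¹
                * ∑ u ∈ idxIn G (Zpart i), ∑ s ∈ idxIn S (Zpart i), ‖h (S s) - h (G u)‖) := by
              field_simp
      have h6b : empLoss ℓ G (idxIn G (Zpart i)) ≤
          (if Goodg i then cgf i else empLoss ℓ G (idxIn G (Zpart i)))
          + L * tupRob h Pg (Zpart i) G (idxIn G (Zpart i)) := by
        by_cases hgi : Goodg i
        · rw [if_pos hgi]
          haveI := hcondg i
          have hpt : ∀ u ∈ idxIn G (Zpart i),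
              ℓ (G u) ≤ cgf i + L * locRob h Pg (Zpart i) (G u) := by
            intro u _
            have habs := cond_integral_close hh hℓ hℓ0 hℓC hLip Pg (Zpart i) hgi (G u)
            have h2 := (abs_le.1 habs).1
            rw [hcgf]
            simp only at h2 ⊢
            linarith
          have hsum := Finset.sum_le_sum hpt
          rw [Finset.sum_add_distrib, Finset.sum_const, nsmul_eq_mul, ← Finset.mul_sum] at hsum
          rw [empLoss, tupRob]
          calc ((idxIn G (Zpart i)).card : ℝ)⁻¹ * ∑ u ∈ idxIn G (Zpart i), ℓ (G u)
              ≤ ((idxIn G (Zpart i)).card : ℝ)⁻¹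
                * (((idxIn G (Zpart i)).card : ℝ) * cgf i
                  + L * ∑ u ∈ idxIn G (Zpart i), locRob h Pg (Zpart i) (G u)) :=
              mul_le_mul_of_nonneg_left hsum (by positivity)
            _ = cgf i + L * (((idxIn G (Zpart i)).card : ℝ)⁻¹
                * ∑ u ∈ idxIn G (Zpart i), locRob h Pg (Zpart i) (G u)) := by
              field_simp
        · rw [if_neg hgi]
          have hz : tupRob h Pg (Zpart i) G (idxIn G (Zpart i)) = 0 := by
            haveI := hcondg i
            rw [tupRob, Finset.sum_eq_zero, mul_zero]
            intro u _
            exact locRob_zero hh Pg (Zpart i) hgi (G u)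
          rw [hz, mul_zero, add_zero]
      calc empLoss ℓ S (idxIn S (Zpart i))
          ≤ empLoss ℓ G (idxIn G (Zpart i))
            + L * disc h G (idxIn G (Zpart i)) S (idxIn S (Zpart i)) := h6a
        _ ≤ ((if Goodg i then cgf i else empLoss ℓ G (idxIn G (Zpart i)))
              + L * tupRob h Pg (Zpart i) G (idxIn G (Zpart i)))
            + L * disc h G (idxIn G (Zpart i)) S (idxIn S (Zpart i)) :=
            add_le_add_left h6b _
        _ = L * (disc h G (idxIn G (Zpart i)) S (idxIn S (Zpart i))
              + tupRob h Pg (Zpart i) G (idxIn G (Zpart i)))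
            + (if Goodg i then cgf i else empLoss ℓ G (idxIn G (Zpart i))) := by ring
    -- assemble
    have t2 : ∑ i ∈ T, (((idxIn S (Zpart i)).card : ℝ) / (n : ℝ))
          * (if Good0 i then c0f i else empLoss ℓ S (idxIn S (Zpart i)))
        ≤ ∑ i ∈ T, (((idxIn S (Zpart i)).card : ℝ) / (n : ℝ))
            * empLoss ℓ S (idxIn S (Zpart i))
          + L * ∑ i ∈ T, (((idxIn S (Zpart i)).card : ℝ) / (n : ℝ))
            * tupRob h P0 (Zpart i) S (idxIn S (Zpart i)) := by
      rw [Finset.mul_sum, ← Finset.sum_add_distrib]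
      apply Finset.sum_le_sum
      intro i hi
      have hp : 0 ≤ ((idxIn S (Zpart i)).card : ℝ) / (n : ℝ) := by positivity
      calc (((idxIn S (Zpart i)).card : ℝ) / (n : ℝ))
            * (if Good0 i then c0f i else empLoss ℓ S (idxIn S (Zpart i)))
          ≤ (((idxIn S (Zpart i)).card : ℝ) / (n : ℝ))
            * (empLoss ℓ S (idxIn S (Zpart i))
              + L * tupRob h P0 (Zpart i) S (idxIn S (Zpart i))) :=
            mul_le_mul_of_nonneg_left (hstep4 i hi) hp
        _ = (((idxIn S (Zpart i)).card : ℝ) / (n : ℝ)) * empLoss ℓ S (idxIn S (Zpart i))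
            + L * ((((idxIn S (Zpart i)).card : ℝ) / (n : ℝ))
              * tupRob h P0 (Zpart i) S (idxIn S (Zpart i))) := by ring
    have t3 : ∑ i ∈ T, (((idxIn S (Zpart i)).card : ℝ) / (n : ℝ))
          * empLoss ℓ S (idxIn S (Zpart i))
        = ∑ i ∈ T, ((((idxIn S (Zpart i)).card : ℝ) / (n : ℝ))
            - (((idxIn G (Zpart i)).card : ℝ) / (g : ℝ)))
            * empLoss ℓ S (idxIn S (Zpart i))
          + ∑ i ∈ T, (((idxIn G (Zpart i)).card : ℝ) / (g : ℝ))
            * empLoss ℓ S (idxIn S (Zpart i)) := by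
      rw [← Finset.sum_add_distrib]
      exact Finset.sum_congr rfl fun i _ => by ring
    have t4 : ∑ i ∈ T, (((idxIn G (Zpart i)).card : ℝ) / (g : ℝ))
          * empLoss ℓ S (idxIn S (Zpart i))
        ≤ L * ∑ i ∈ T, (((idxIn G (Zpart i)).card : ℝ) / (g : ℝ))
            * (disc h G (idxIn G (Zpart i)) S (idxIn S (Zpart i))
              + tupRob h Pg (Zpart i) G (idxIn G (Zpart i)))
          + ∑ i ∈ T, (((idxIn G (Zpart i)).card : ℝ) / (g : ℝ))
            * (if Goodg i then cgf i else empLoss ℓ G (idxIn G (Zpart i))) := by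
      rw [Finset.mul_sum, ← Finset.sum_add_distrib]
      apply Finset.sum_le_sum
      intro i hi
      have hq : 0 ≤ ((idxIn G (Zpart i)).card : ℝ) / (g : ℝ) := by positivity
      calc (((idxIn G (Zpart i)).card : ℝ) / (g : ℝ)) * empLoss ℓ S (idxIn S (Zpart i))
          ≤ (((idxIn G (Zpart i)).card : ℝ) / (g : ℝ))
            * (L * (disc h G (idxIn G (Zpart i)) S (idxIn S (Zpart i))
                + tupRob h Pg (Zpart i) G (idxIn G (Zpart i)))
              + (if Goodg i then cgf i else empLoss ℓ G (idxIn G (Zpart i)))) :=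
            mul_le_mul_of_nonneg_left (hstep6 i hi) hq
        _ = L * ((((idxIn G (Zpart i)).card : ℝ) / (g : ℝ))
              * (disc h G (idxIn G (Zpart i)) S (idxIn S (Zpart i))
                + tupRob h Pg (Zpart i) G (idxIn G (Zpart i))))
            + (((idxIn G (Zpart i)).card : ℝ) / (g : ℝ))
              * (if Goodg i then cgf i else empLoss ℓ G (idxIn G (Zpart i))) := by ring
    have hceq : C * (1 / Real.sqrt n + 1 / Real.sqrt g)
        * Real.sqrt (2 * K * Real.log 2 + 2 * Real.log (2 / δ)) = C * εn + C * εg := by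
      rw [hεn_def, hεg_def, ← hE_def]
      have h1 : Real.sqrt n ≠ 0 := ne_of_gt (Real.sqrt_pos.2 hnpos)
      have h2 : Real.sqrt g ≠ 0 := ne_of_gt (Real.sqrt_pos.2 hgpos)
      field_simp
    linarith [hbar0, t2, t3, t4, hstep7, hceq]

  -- measure arithmetic
  have hcover2 : (Set.univ : Set ((Fin n → Z) × (Fin g → Z)))
      ⊆ Target ∪ (Prod.fst ⁻¹' A0) ∪ (Prod.snd ⁻¹' B0) := by
    intro SG _
    by_cases h1 : SG ∈ Prod.fst ⁻¹' A0
    · exact Or.inl (Or.inr h1)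
    by_cases h2 : SG ∈ Prod.snd ⁻¹' B0
    · exact Or.inr h2
    · exact Or.inl (Or.inl (hincl ⟨h1, h2⟩))
  have hmA : μpr (Prod.fst ⁻¹' A0) ≤ ENNReal.ofReal (δ / 2) := by
    rw [hμpr, ← Set.prod_univ, Measure.prod_prod, measure_univ, mul_one]
    exact hPA0
  have hmB : μpr (Prod.snd ⁻¹' B0) ≤ ENNReal.ofReal (δ / 2) := by
    rw [hμpr, ← Set.univ_prod, Measure.prod_prod, measure_univ, one_mul]
    exact hPB0
  have hone : (1 : ENNReal) ≤ μpr Target + ENNReal.ofReal (δ / 2) + ENNReal.ofReal (δ / 2) := by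
    calc (1 : ENNReal) = μpr Set.univ := measure_univ.symm
      _ ≤ μpr (Target ∪ Prod.fst ⁻¹' A0 ∪ Prod.snd ⁻¹' B0) := measure_mono hcover2
      _ ≤ μpr (Target ∪ Prod.fst ⁻¹' A0) + μpr (Prod.snd ⁻¹' B0) := measure_union_le _ _
      _ ≤ (μpr Target + μpr (Prod.fst ⁻¹' A0)) + μpr (Prod.snd ⁻¹' B0) :=
          add_le_add_left (measure_union_le _ _) _
      _ ≤ μpr Target + ENNReal.ofReal (δ / 2) + ENNReal.ofReal (δ / 2) :=
          add_le_add (add_le_add le_rfl hmA) hmB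
  rw [tsub_le_iff_right]
  have hofr : ENNReal.ofReal (δ / 2) + ENNReal.ofReal (δ / 2) = ENNReal.ofReal δ := by
    rw [← ENNReal.ofReal_add (by linarith) (by linarith)]
    norm_num
  calc (1 : ENNReal) ≤ μpr Target + ENNReal.ofReal (δ / 2) + ENNReal.ofReal (δ / 2) := hone
    _ = μpr Target + ENNReal.ofReal δ := by rw [add_assoc, hofr]
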